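/- For any M-monadic proper expression E over Σ and any word w ∈ Σ*, the weight of w equals the derivative of E by w bound with nullability: weight_w(E) = d_w(E) >>= Null. -/

import Mathlib

/-- `M`-monadic expressions over an alphabet `A`, where `K = M(𝟙)`. -/
inductive MExp (A K : Type) : Type
  | sym : A → MExp A K
  | eps : MExp A K
  | empty : MExp A K
  | plus : MExp A K → MExp A K → MExp A K
  | times : MExp A K → MExp A K → MExp A K
  | star : MExp A K → MExp A K
  | lact : K → MExp A K → MExp A K
  | ract : MExp A K → K → MExp A K
  | fn : (n : ℕ) → ((Fin n → K) → K) → (Fin n → MExp A K) → MExp A K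

variable {A K : Type}

/-- The nullability value (for star, `1`, valid on proper expressions). -/
def MExp.null [Semiring K] : MExp A K → K
  | .sym _ => 0
  | .eps => 1
  | .empty => 0
  | .plus e₁ e₂ => e₁.null + e₂.null
  | .times e₁ e₂ => e₁.null * e₂.null
  | .star _ => 1
  | .lact k e => k * e.null
  | .ract e k => e.null * k
  | .fn _ f es => f (fun i => (es i).null)

/-- Properness: every starred subexpression has a null nullability value. -/
def MExp.IsProper [Semiring K] : MExp A K → Prop
  | .sym _ | .eps | .empty => True
  | .plus e₁ e₂ | .times e₁ e₂ => e₁.IsProper ∧ e₂.IsProper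
  | .star e => e.IsProper ∧ e.null = 0
  | .lact _ e | .ract e _ => e.IsProper
  | .fn _ _ es => ∀ i, (es i).IsProper

/-- Cauchy product of series. -/
def cauchy [Semiring K] (S₁ S₂ : List A → K) : List A → K :=
  fun w => ∑ i ∈ Finset.range (w.length + 1), S₁ (w.take i) * S₂ (w.drop i)

/-- Star of a series: sum over factorizations into nonempty factors. -/
def starSeries [Semiring K] (S : List A → K) : List A → K
  | [] => 1
  | w => ∑ c : Composition w.length, ((w.splitWrtComposition c).map S).prod

/-- The series associated with an expression. -/
def MExp.series [Semiring K] [DecidableEq A] : MExp A K → List A → K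
  | .sym a, w => if w = [a] then 1 else 0
  | .eps, w => if w = [] then 1 else 0
  | .empty, _ => 0
  | .plus e₁ e₂, w => e₁.series w + e₂.series w
  | .times e₁ e₂, w => cauchy e₁.series e₂.series w
  | .star e, w => starSeries e.series w
  | .lact k e, w => k * e.series w
  | .ract e k, w => e.series w * k
  | .fn _ f es, w => f (fun i => (es i).series w)

/-- The weight associated with a word `w` by an expression `E`: `weight_w(E) = S(E)(w)`. -/
def MExp.weight [Semiring K] [DecidableEq A] (w : List A) (E : MExp A K) : K := E.series w

/-- An expressive support for a monad `M`: a monoid `(M(Exp(Σ)), ±, 0̲)`, a right action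
`⋉` of expressions, left and right actions `▷`, `◁` of `M(𝟙)`, an operad-module action
`⋇` of functions over `M(𝟙)`, and a function `toExp` compatible with all operations
(where two expressions denoting the same series are identified). -/
structure ExpressiveSupport (M : Type → Type) (A : Type) [Monad M]
    [Semiring (M PUnit)] [DecidableEq A] where
  pm : M (MExp A (M PUnit)) → M (MExp A (M PUnit)) → M (MExp A (M PUnit))
  zero : M (MExp A (M PUnit))
  ltimes : M (MExp A (M PUnit)) → MExp A (M PUnit) → M (MExp A (M PUnit))
  lactM : M PUnit → M (MExp A (M PUnit)) → M (MExp A (M PUnit))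
  ractM : M (MExp A (M PUnit)) → M PUnit → M (MExp A (M PUnit))
  fapp : (n : ℕ) → ((Fin n → M PUnit) → M PUnit) →
    (Fin n → M (MExp A (M PUnit))) → M (MExp A (M PUnit))
  toExp : M (MExp A (M PUnit)) → MExp A (M PUnit)
  /-- monoid laws for `±` with unit `0̲` -/
  pm_assoc : ∀ m₁ m₂ m₃, pm (pm m₁ m₂) m₃ = pm m₁ (pm m₂ m₃)
  pm_zero : ∀ m, pm m zero = m
  zero_pm : ∀ m, pm zero m = m
  /-- `weight_w(toExp(m)) = m >>= weight_w` -/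
  weight_toExp : ∀ (w : List A) m, (toExp m).weight w = m >>= MExp.weight w
  /-- `toExp(m ⋉ F) = toExp(m) · F` -/
  toExp_ltimes : ∀ m F w, (toExp (ltimes m F)).series w = ((toExp m).times F).series w
  /-- `toExp(m ± m') = toExp(m) + toExp(m')` -/
  toExp_pm : ∀ m m' w, (toExp (pm m m')).series w = ((toExp m).plus (toExp m')).series w
  /-- `toExp(α ▷ m) = α ⊙ toExp(m)` -/
  toExp_lact : ∀ α m w, (toExp (lactM α m)).series w = (MExp.lact α (toExp m)).series w
  /-- `toExp(m ◁ α) = toExp(m) ⊙ α` -/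
  toExp_ract : ∀ m α w, (toExp (ractM m α)).series w = (MExp.ract (toExp m) α).series w
  /-- `toExp(f ⋇ (m₁,…,mₙ)) = f(toExp(m₁),…,toExp(mₙ))` -/
  toExp_fapp : ∀ n f ms w,
    (toExp (fapp n f ms)).series w = (MExp.fn n f (fun i => toExp (ms i))).series w

variable {M : Type → Type} [Monad M] [Semiring (M PUnit)] [DecidableEq A]

/-- The monadic derivative of an expression w.r.t. a symbol. -/
def mderiv (sup : ExpressiveSupport M A) (a : A) :
    MExp A (M PUnit) → M (MExp A (M PUnit))
  | .sym b => if a = b then pure MExp.eps else sup.zero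
  | .eps => sup.zero
  | .empty => sup.zero
  | .plus e₁ e₂ => sup.pm (mderiv sup a e₁) (mderiv sup a e₂)
  | .times e₁ e₂ =>
      sup.pm (sup.ltimes (mderiv sup a e₁) e₂) (sup.lactM e₁.null (mderiv sup a e₂))
  | .star e => sup.ltimes (mderiv sup a e) (MExp.star e)
  | .lact α e => sup.lactM α (mderiv sup a e)
  | .ract e α => sup.ractM (mderiv sup a e) α
  | .fn n f es => sup.fapp n f (fun i => mderiv sup a (es i))

/-- The derivative w.r.t. a word: `d_ε(E) = pure E`, `d_{a·v}(E) = d_a(E) >>= d_v`. -/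
def mderivW (sup : ExpressiveSupport M A) :
    List A → MExp A (M PUnit) → M (MExp A (M PUnit))
  | [], E => pure E
  | a :: v, E => mderiv sup a E >>= mderivW sup v


/-! ### Auxiliary lemmas -/

lemma MExp.series_nil [Semiring K] (E : MExp A K) :
    E.series [] = E.null := by
  induction E with
  | sym a => simp [series, null]
  | eps => simp [series, null]
  | empty => simp [series, null]
  | plus e₁ e₂ ih₁ ih₂ => simp [series, null, ih₁, ih₂]
  | times e₁ e₂ ih₁ ih₂ => simp [series, null, cauchy, ih₁, ih₂]
  | star e ih => simp [series, null, starSeries]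
  | lact k e ih => simp [series, null, ih]
  | ract e k ih => simp [series, null, ih]
  | fn n f es ih => simp only [series, null, ih]

lemma comp_zero_blocks (c : Composition 0) : c.blocks = [] := by
  cases h : c.blocks with
  | nil => rfl
  | cons x t =>
    have hp := c.blocks_pos (h ▸ (List.mem_cons_self : x ∈ x :: t))
    have hs := c.blocks_sum
    rw [h, List.sum_cons] at hs
    omega

lemma starSeries_eq_sum [Semiring K] (s : List A → K) (w : List A) :
    starSeries s w = ∑ c : Composition w.length, ((w.splitWrtComposition c).map s).prod := by
  cases w with
  | nil =>
    haveI : Unique (Composition 0) :=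
      ⟨⟨default⟩, fun c => Composition.ext
        ((comp_zero_blocks c).trans (comp_zero_blocks default).symm)⟩
    rw [show (([] : List A).length) = 0 from rfl, Fintype.sum_unique]
    rw [List.splitWrtComposition, comp_zero_blocks]
    simp [starSeries, List.splitWrtCompositionAux]
  | cons a w => rfl

lemma blocks_ne_nil {n : ℕ} (c : Composition (n + 1)) : c.blocks ≠ [] := by
  intro h
  have := c.blocks_sum
  rw [h] at this
  simp at this

lemma starSeries_cons [Semiring K] (s : List A → K) (a : A) (w : List A) :
    starSeries s (a :: w) =
      ∑ i ∈ Finset.range (w.length + 1),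
        s ((a :: w).take (i + 1)) * starSeries s (w.drop i) := by
  rw [starSeries_eq_sum]
  simp only [starSeries_eq_sum]
  simp only [Finset.mul_sum]
  rw [Finset.sum_sigma']
  refine Finset.sum_bij'
    (i := fun (c : Composition (a :: w).length) (hc : c ∈ Finset.univ) =>
      (⟨c.blocks.head! - 1, ⟨c.blocks.tail, fun {x} hx => c.blocks_pos (List.mem_of_mem_tail hx), by
        have hne : c.blocks ≠ [] := blocks_ne_nil c
        have hhead : c.blocks.head! ∈ c.blocks := List.head!_mem_self hne
        have hpos := c.blocks_pos hhead
        have hsum := c.blocks_sum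
        have htail : c.blocks.head! + c.blocks.tail.sum = c.blocks.sum := by
          conv_rhs => rw [← List.cons_head!_tail hne]
          rw [List.sum_cons]
        rw [List.length_drop]
        simp only [List.length_cons] at hsum
        omega⟩⟩ :
        (i : ℕ) × Composition (w.drop i).length))
    (j := fun p hp => ⟨(p.1 + 1) :: p.2.blocks, by
        intro x hx
        rcases List.mem_cons.1 hx with h | h
        · omega
        · exact p.2.blocks_pos h, by
        have h1 := p.2.blocks_sum
        have hd : (w.drop p.1).length = w.length - p.1 := List.length_drop
        have h2 := Finset.mem_range.1 (Finset.mem_sigma.1 hp).1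
        simp only [List.sum_cons, List.length_cons]
        omega⟩)
    ?_ ?_ ?_ ?_ ?_
  · intro c hc
    refine Finset.mem_sigma.2 ⟨Finset.mem_range.2 ?_, Finset.mem_univ _⟩
    show c.blocks.head! - 1 < w.length + 1
    have hne : c.blocks ≠ [] := blocks_ne_nil c
    have hhead : c.blocks.head! ∈ c.blocks := List.head!_mem_self hne
    have h1 := c.blocks_pos hhead
    have h2 : c.blocks.head! + c.blocks.tail.sum = c.blocks.sum := by
      conv_rhs => rw [← List.cons_head!_tail hne]
      rw [List.sum_cons]
    have h3 := c.blocks_sum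
    simp only [List.length_cons] at h3
    omega
  · intro p hp
    exact Finset.mem_univ _
  · intro c hc
    have hne : c.blocks ≠ [] := blocks_ne_nil c
    have h1 := c.blocks_pos (List.head!_mem_self hne)
    apply Composition.ext
    simp only
    rw [show c.blocks.head! - 1 + 1 = c.blocks.head! from by omega]
    exact List.cons_head!_tail hne
  · intro p hp
    rfl
  · intro c hc
    have hne : c.blocks ≠ [] := blocks_ne_nil c
    have h1 := c.blocks_pos (List.head!_mem_self hne)
    have hh : c.blocks = (c.blocks.head! - 1 + 1) :: c.blocks.tail := by
      rw [show c.blocks.head! - 1 + 1 = c.blocks.head! from by omega]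
      exact (List.cons_head!_tail hne).symm
    simp only [List.splitWrtComposition]
    conv_lhs => rw [hh]
    rw [List.splitWrtCompositionAux_cons, List.map_cons, List.prod_cons, List.drop_succ_cons]


lemma toExp_zero_series [LawfulMonad M] (sup : ExpressiveSupport M A) (w : List A) :
    (sup.toExp sup.zero).series w = 0 := by
  have h := congrArg (fun m => (sup.toExp m).series w)
    (sup.pm_zero (sup.fapp 0 (fun _ => 0) (fun i => i.elim0)))
  rw [sup.toExp_pm] at h
  simp only [MExp.series] at h
  rw [sup.toExp_fapp] at h
  simp only [MExp.series] at h
  rw [zero_add] at h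
  exact h

lemma bind_weight [LawfulMonad M] (sup : ExpressiveSupport M A)
    (m : M (MExp A (M PUnit))) (w : List A) :
    m >>= MExp.weight w = (sup.toExp m).series w :=
  (sup.weight_toExp w m).symm

/-- Fundamental lemma: `weight_{aw}(E) = d_a(E) >>= weight_w`. -/
lemma fund [LawfulMonad M] (sup : ExpressiveSupport M A) (E : MExp A (M PUnit)) :
    ∀ (a : A) (w : List A),
      E.series (a :: w) = (sup.toExp (mderiv sup a E)).series w := by
  induction E with
  | sym b =>
    intro a w
    simp only [mderiv]
    by_cases hab : a = b
    · subst hab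
      rw [if_pos rfl, ← bind_weight sup, pure_bind]
      simp [MExp.weight, MExp.series]
    · rw [if_neg hab, toExp_zero_series]
      simp only [MExp.series]
      rw [if_neg (by simp [hab])]
  | eps =>
    intro a w
    simp only [mderiv, toExp_zero_series, MExp.series]
    rw [if_neg (by simp)]
  | empty =>
    intro a w
    simp [mderiv, toExp_zero_series, MExp.series]
  | plus e₁ e₂ ih₁ ih₂ =>
    intro a w
    simp only [mderiv, MExp.series]
    rw [sup.toExp_pm]
    simp only [MExp.series, ih₁, ih₂]
  | times e₁ e₂ ih₁ ih₂ =>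
    intro a w
    simp only [mderiv, MExp.series]
    rw [sup.toExp_pm]
    simp only [MExp.series]
    rw [sup.toExp_ltimes, sup.toExp_lact]
    simp only [MExp.series]
    rw [← ih₂ a w, ← MExp.series_nil e₁]
    simp only [cauchy]
    rw [Finset.sum_range_succ']
    simp only [List.take_succ_cons, List.drop_succ_cons, List.take_zero, List.drop_zero,
      List.length_cons]
    congr 1
    apply Finset.sum_congr rfl
    intro i _
    rw [ih₁ a (w.take i)]
  | star e ih =>
    intro a w
    simp only [mderiv, MExp.series]
    rw [sup.toExp_ltimes]
    simp only [MExp.series]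
    rw [starSeries_cons]
    simp only [cauchy]
    apply Finset.sum_congr rfl
    intro i _
    rw [List.take_succ_cons, ih a (w.take i)]
  | lact k e ih =>
    intro a w
    simp only [mderiv, MExp.series]
    rw [sup.toExp_lact]
    simp only [MExp.series, ih]
  | ract e k ih =>
    intro a w
    simp only [mderiv, MExp.series]
    rw [sup.toExp_ract]
    simp only [MExp.series, ih]
  | fn n f es ih =>
    intro a w
    simp only [mderiv, MExp.series]
    rw [sup.toExp_fapp]
    simp only [MExp.series]
    congr 1
    funext i
    exact ih i a w

/-- For any proper `M`-monadic expression `E` and word `w`, the weight of `w` equals the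
derivative of `E` by `w` bound with nullability: `weight_w(E) = d_w(E) >>= Null`. -/
theorem weight_eq_derivW_bind_null [LawfulMonad M]
    (sup : ExpressiveSupport M A) (E : MExp A (M PUnit)) (hE : E.IsProper)
    (w : List A) :
    E.weight w = mderivW sup w E >>= MExp.null := by
  clear hE
  induction w generalizing E with
  | nil =>
    rw [mderivW, pure_bind]
    exact MExp.series_nil E
  | cons a v ih =>
    rw [mderivW, bind_assoc]
    have h2 : (fun E' => mderivW sup v E' >>= MExp.null) = MExp.weight v :=
      funext fun E' => (ih E').symm
    rw [h2, bind_weight sup]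
    exact fund sup E a v
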